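/- arXiv:2010.11996 — 2 statements merged into one kernel-verified Lean document; each statement's English description precedes it below -/
import Mathlib

section
/- If $p$ and $q$ are odd nonnegative integers, then there exists a nonsingular real bilinear map $\mathbb{R}^{p+1} \times \mathbb{R}^{q+1} \to \mathbb{R}^{p+q}$. (Construction: identify $\mathbb{R}^{p+1} \cong \mathbb{C}^{(p+1)/2}$ and $\mathbb{R}^{q+1} \cong \mathbb{C}^{(q+1)/2}$ with complex polynomials of degrees less than $(p+1)/2$ and $(q+1)/2$, and multiply; the product has complex degree less than $(p+q)/2$, giving real dimension $p+q$.) -/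
noncomputable def toC (m : ℕ) (x : ℕ → ℝ) : Polynomial ℂ :=
  ∑ j ∈ Finset.range m, Polynomial.monomial j (⟨x (2*j), x (2*j+1)⟩ : ℂ)

lemma toC_coeff (m : ℕ) (x : ℕ → ℝ) (j : ℕ) :
    (toC m x).coeff j = if j < m then (⟨x (2*j), x (2*j+1)⟩ : ℂ) else 0 := by
  simp [toC, Polynomial.finset_sum_coeff, Polynomial.coeff_monomial,
    Finset.sum_ite_eq, Finset.mem_range]

lemma toC_add (m : ℕ) (x y : ℕ → ℝ) :
    toC m (fun i => x i + y i) = toC m x + toC m y := by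
  apply Polynomial.ext; intro k
  simp only [toC_coeff, Polynomial.coeff_add]
  split
  · exact Complex.ext (by simp) (by simp)
  · simp

lemma toC_smul (m : ℕ) (c : ℝ) (x : ℕ → ℝ) :
    toC m (fun i => c * x i) = (c : ℂ) • toC m x := by
  apply Polynomial.ext; intro k
  simp only [toC_coeff, Polynomial.coeff_smul]
  split
  · exact Complex.ext (by simp) (by simp)
  · simp

lemma toC_degree (a : ℕ) (x : ℕ → ℝ) : (toC (a+1) x).degree ≤ (a : WithBot ℕ) := by
  refine (Polynomial.degree_sum_le _ _).trans ?_
  apply Finset.sup_le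
  intro j hj
  refine (Polynomial.degree_monomial_le _ _).trans ?_
  exact_mod_cast Nat.lt_succ_iff.mp (Finset.mem_range.mp hj)

lemma toC_eq_zero (m : ℕ) (x : ℕ → ℝ) (h : toC m x = 0) :
    ∀ i, i < 2 * m → x i = 0 := by
  intro i hi
  have h2 : (toC m x).coeff (i / 2) = 0 := by rw [h]; simp
  rw [toC_coeff] at h2
  have hlt : i / 2 < m := by omega
  rw [if_pos hlt, Complex.ext_iff] at h2
  simp only [Complex.zero_re, Complex.zero_im] at h2
  rcases Nat.mod_two_eq_zero_or_one i with he | ho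
  · have : i = 2 * (i / 2) := by omega
    rw [this]; exact h2.1
  · have : i = 2 * (i / 2) + 1 := by omega
    rw [this]; exact h2.2

/-- For odd `p` and `q` there exists a nonsingular real bilinear map
`ℝ^{p+1} × ℝ^{q+1} → ℝ^{p+q}`. -/
theorem stmt_3 (p q : ℕ) (hp : Odd p) (hq : Odd q) :
    ∃ B : (Fin (p + 1) → ℝ) → (Fin (q + 1) → ℝ) → (Fin (p + q) → ℝ),
      (∀ y, IsLinearMap ℝ fun x => B x y) ∧
      (∀ x, IsLinearMap ℝ fun y => B x y) ∧
      (∀ x y, B x y = 0 → x = 0 ∨ y = 0) := by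
  obtain ⟨a, rfl⟩ := hp
  obtain ⟨b, rfl⟩ := hq
  set extx : (Fin (2*a+1+1) → ℝ) → ℕ → ℝ :=
    fun x i => if h : i < 2*a+1+1 then x ⟨i, h⟩ else 0 with hextx
  set exty : (Fin (2*b+1+1) → ℝ) → ℕ → ℝ :=
    fun y i => if h : i < 2*b+1+1 then y ⟨i, h⟩ else 0 with hexty
  refine ⟨fun x y k =>
      if k.val % 2 = 0 then ((toC (a+1) (extx x) * toC (b+1) (exty y)).coeff (k.val/2)).re
      else ((toC (a+1) (extx x) * toC (b+1) (exty y)).coeff (k.val/2)).im, ?_, ?_, ?_⟩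
  · intro y
    constructor
    · intro x x'
      funext k
      have hadd : extx (x + x') = fun i => extx x i + extx x' i := by
        funext i; simp only [hextx]; split <;> simp
      simp only [hadd, toC_add, add_mul, Polynomial.coeff_add, Complex.add_re,
        Complex.add_im, Pi.add_apply]
      split <;> rfl
    · intro c x
      funext k
      have hsmul : extx (c • x) = fun i => c * extx x i := by
        funext i; simp only [hextx]; split <;> simp
      simp only [hsmul, toC_smul, smul_mul_assoc, Polynomial.coeff_smul,
        Complex.real_smul, Complex.mul_re, Complex.mul_im, Complex.ofReal_re,
        Complex.ofReal_im, Pi.smul_apply, smul_eq_mul]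
      split <;> ring
  · intro x
    constructor
    · intro y y'
      funext k
      have hadd : exty (y + y') = fun i => exty y i + exty y' i := by
        funext i; simp only [hexty]; split <;> simp
      simp only [hadd, toC_add, mul_add, Polynomial.coeff_add, Complex.add_re,
        Complex.add_im, Pi.add_apply]
      split <;> rfl
    · intro c y
      funext k
      have hsmul : exty (c • y) = fun i => c * exty y i := by
        funext i; simp only [hexty]; split <;> simp
      simp only [hsmul, toC_smul, mul_smul_comm, Polynomial.coeff_smul,
        Complex.real_smul, Complex.mul_re, Complex.mul_im, Complex.ofReal_re,
        Complex.ofReal_im, Pi.smul_apply, smul_eq_mul]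
      split <;> ring
  · intro x y h
    have hPQ : toC (a+1) (extx x) * toC (b+1) (exty y) = 0 := by
      apply Polynomial.ext; intro k
      by_cases hk : k < a + b + 1
      · have h1 : (2*k) < 2*a+1+(2*b+1) := by omega
        have h2 : (2*k+1) < 2*a+1+(2*b+1) := by omega
        have e1 := congrFun h ⟨2*k, h1⟩
        have e2 := congrFun h ⟨2*k+1, h2⟩
        simp only [Pi.zero_apply] at e1 e2
        have d1 : (2*k) % 2 = 0 := by omega
        have d2 : (2*k+1) % 2 ≠ 0 := by omega
        have q1 : (2*k) / 2 = k := by omega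
        have q2 : (2*k+1) / 2 = k := by omega
        rw [if_pos d1, q1] at e1
        rw [if_neg d2, q2] at e2
        rw [Polynomial.coeff_zero]
        exact Complex.ext e1 e2
      · rw [Polynomial.coeff_zero]
        apply Polynomial.coeff_eq_zero_of_degree_lt
        refine (Polynomial.degree_mul_le _ _).trans_lt ?_
        calc (toC (a+1) (extx x)).degree + (toC (b+1) (exty y)).degree
            ≤ (a : WithBot ℕ) + (b : WithBot ℕ) :=
              add_le_add (toC_degree a _) (toC_degree b _)
          _ < (k : WithBot ℕ) := by
              rw [← Nat.cast_add]
              exact_mod_cast (by omega : a + b < k)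
    rcases mul_eq_zero.mp hPQ with hP | hQ
    · left
      funext i
      have hi : (i : ℕ) < 2 * (a + 1) := by omega
      have := toC_eq_zero (a+1) (extx x) hP i hi
      simpa only [hextx, dif_pos i.isLt, Fin.eta, Pi.zero_apply] using this
    · right
      funext i
      have hi : (i : ℕ) < 2 * (b + 1) := by omega
      have := toC_eq_zero (b+1) (exty y) hQ i hi
      simpa only [hexty, dif_pos i.isLt, Fin.eta, Pi.zero_apply] using this
end

section
/- Let $\Sigma$ be a simplicial complex on ground set $[n]$ with $\chi(\mathrm{KG}(\Sigma)) = c$, where $\mathrm{KG}(\Sigma)$ is the Kneser graph of nonfaces of $\Sigma$. Then $\Sigma$ can be written as an intersection $\Sigma = \Sigma_1 \cap \cdots \cap \Sigma_c$ of simplicial complexes on $[n]$ such that for each $j$, any two nonfaces of $\Sigma_j$ intersect. -/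
/-- If the Kneser graph of nonfaces of a simplicial complex `K` on `[n]` has a proper
coloring with `c` colors, then `K` is the intersection of `c` simplicial complexes on `[n]`,
each of which has pairwise intersecting nonfaces. -/
theorem stmt_7 (n c : ℕ) (K : Set (Finset (Fin n)))
    (hdc : ∀ σ ∈ K, ∀ τ ⊆ σ, τ ∈ K)
    (col : Finset (Fin n) → Fin c)
    (hcol : ∀ σ τ : Finset (Fin n), σ ∉ K → τ ∉ K → Disjoint σ τ → col σ ≠ col τ) :
    ∃ S : Fin c → Set (Finset (Fin n)),
      (∀ j, ∀ σ ∈ S j, ∀ τ ⊆ σ, τ ∈ S j) ∧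
      K = ⋂ j, S j ∧
      (∀ j, ∀ σ τ : Finset (Fin n), σ ∉ S j → τ ∉ S j → ¬ Disjoint σ τ) := by
  refine ⟨fun j => {σ | ¬ ∃ τ ⊆ σ, τ ∉ K ∧ col τ = j}, ?_, ?_, ?_⟩
  · intro j σ hσ τ hτ ⟨ρ, hρτ, hρ⟩
    exact hσ ⟨ρ, hρτ.trans hτ, hρ⟩
  · ext σ
    constructor
    · intro hσ
      refine Set.mem_iInter.2 fun j ⟨τ, hτσ, hτK, _⟩ => hτK (hdc σ hσ τ hτσ)
    · intro hσ
      by_contra hK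
      exact Set.mem_iInter.1 hσ (col σ) ⟨σ, subset_rfl, hK, rfl⟩
  · intro j σ τ hσ hτ hd
    rw [Set.mem_setOf_eq, not_not] at hσ hτ
    obtain ⟨a, haσ, haK, haj⟩ := hσ
    obtain ⟨b, hbτ, hbK, hbj⟩ := hτ
    exact hcol a b haK hbK (hd.mono haσ hbτ) (haj.trans hbj.symm)
end
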